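/- Let Q₁, Q₂, Q₃ ∈ ℝ, r₁, r₂, r₃ > 0, and define Ṽ(x₁, x₂, x₃) = ∑_{i=1}^3 ((r_i/2)‖x_i - m_i‖² - Q_i²‖x_i‖²) - ∑_{1≤i<j≤3} (Q_iQ_j/2) arctan‖x_i - x_j‖² on (ℝ²)³, where m_i ∈ ℝ² are fixed centers. If λ := min_{1≤i≤3}( r_i - 4Q_i² - |Q_i| ∑_{j≠i} |Q_j| ) > 0, then Ṽ is λ-strongly convex, i.e., its Hessian satisfies y^T ∇²Ṽ(x) y ≥ λ‖y‖² for all x, y ∈ (ℝ²)³. -/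

import Mathlib

open Finset Real

noncomputable section
namespace Stmt19Aux

abbrev E : Type := EuclideanSpace ℝ (Fin 2)
abbrev X : Type := Fin 3 → E

/-- the real inner product as a continuous bilinear map -/
def bil : E →L[ℝ] E →L[ℝ] ℝ := (innerSL ℝ : E →L⋆[ℝ] E →L[ℝ] ℝ)

@[simp] lemma bil_apply (u v : E) : bil u v = inner ℝ u v := rfl

def cf (u : E) : ℝ := 2 / (1 + (‖u‖ ^ 2) ^ 2)
def cfd (u : E) : E →L[ℝ] ℝ := (-(8 * ‖u‖ ^ 2) / (1 + (‖u‖ ^ 2) ^ 2) ^ 2) • bil u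
def grd (u : E) : E →L[ℝ] ℝ := cf u • bil u
def hss (u : E) : E →L[ℝ] E →L[ℝ] ℝ := cf u • bil + (cfd u).smulRight (bil u)

lemma hasFDerivAt_normSq (u : E) :
    HasFDerivAt (fun v : E => ‖v‖ ^ 2) ((2 : ℕ) • bil u) u := by
  simpa [bil] using (hasFDerivAt_id u).norm_sq

lemma denom_pos (u : E) : (0 : ℝ) < 1 + (‖u‖ ^ 2) ^ 2 := by positivity

lemma hasFDerivAt_arctanSq (u : E) :
    HasFDerivAt (fun v : E => Real.arctan (‖v‖ ^ 2)) (grd u) u := by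
  have h := (Real.hasDerivAt_arctan (‖u‖ ^ 2)).comp_hasFDerivAt u (hasFDerivAt_normSq u)
  refine h.congr_fderiv ?_
  ext v
  simp only [grd, cf, ContinuousLinearMap.smul_apply, smul_eq_mul, smul_smul, nsmul_eq_mul,
    Nat.cast_ofNat]
  ring

lemma hasFDerivAt_cf (u : E) : HasFDerivAt cf (cfd u) u := by
  have h1 : HasDerivAt (fun t : ℝ => 1 + t ^ 2) (2 * ‖u‖ ^ 2) (‖u‖ ^ 2) := by
    simpa using ((hasDerivAt_pow 2 (‖u‖ ^ 2)).const_add 1)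
  have h2 : HasDerivAt (fun t : ℝ => 2 / (1 + t ^ 2))
      ((0 * (1 + (‖u‖ ^ 2) ^ 2) - 2 * (2 * ‖u‖ ^ 2)) / (1 + (‖u‖ ^ 2) ^ 2) ^ 2) (‖u‖ ^ 2) :=
    (hasDerivAt_const _ (2 : ℝ)).div h1 (denom_pos u).ne'
  have h := h2.comp_hasFDerivAt u (hasFDerivAt_normSq u)
  refine h.congr_fderiv ?_
  ext v
  simp only [cfd, ContinuousLinearMap.smul_apply, smul_eq_mul, smul_smul, nsmul_eq_mul,
    Nat.cast_ofNat]
  ring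

lemma hasFDerivAt_grd (u : E) : HasFDerivAt grd (hss u) u :=
  (hasFDerivAt_cf u).smul bil.hasFDerivAt

lemma hss_apply (u v w : E) :
    hss u v w = cf u * inner ℝ v w + (cfd u v) * inner ℝ u w := by
  simp only [hss, ContinuousLinearMap.add_apply, ContinuousLinearMap.smul_apply,
    ContinuousLinearMap.smulRight_apply, smul_eq_mul, bil_apply]

lemma abs_hss_le (u v : E) : |hss u v v| ≤ 2 * ‖v‖ ^ 2 := by
  have hcs : (inner ℝ u v : ℝ) ^ 2 ≤ ‖u‖ ^ 2 * ‖v‖ ^ 2 := by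
    have h := abs_real_inner_le_norm u v
    nlinarith [abs_nonneg (inner ℝ u v : ℝ), sq_abs (inner ℝ u v : ℝ), norm_nonneg u, norm_nonneg v]
  set s := ‖u‖ ^ 2 with hs
  have hs0 : 0 ≤ s := by positivity
  have hval : hss u v v = (2 * ‖v‖ ^ 2 * (1 + s ^ 2) - 8 * s * (inner ℝ u v : ℝ) ^ 2)
      / (1 + s ^ 2) ^ 2 := by
    rw [hss_apply]
    simp only [cfd, cf, ContinuousLinearMap.smul_apply, smul_eq_mul, bil_apply,
      real_inner_self_eq_norm_sq, ← hs]
    have hd : (1 + s ^ 2) ≠ 0 := by positivity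
    field_simp
    ring
  rw [hval, abs_le]
  have hd2 : (0 : ℝ) < (1 + s ^ 2) ^ 2 := by positivity
  constructor
  · rw [le_div_iff₀ hd2]
    nlinarith [hcs, mul_nonneg hs0 (sq_nonneg ‖v‖), sq_nonneg (1 - s),
      mul_nonneg (mul_nonneg hs0 hs0) (sq_nonneg ‖v‖), sq_nonneg ((1 - s) * ‖v‖),
      mul_nonneg (mul_nonneg hs0 hs0) (mul_nonneg hs0 (sq_nonneg ‖v‖))]
  · rw [div_le_iff₀ hd2]
    nlinarith [mul_nonneg hs0 (sq_nonneg (inner ℝ u v : ℝ)), sq_nonneg ‖v‖,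
      mul_nonneg hs0 (sq_nonneg ‖v‖), mul_nonneg (mul_nonneg hs0 hs0) (sq_nonneg ‖v‖)]

def P (i : Fin 3) : X →L[ℝ] E := ContinuousLinearMap.proj i
def W (i : Fin 3) : E →L[ℝ] (X →L[ℝ] ℝ) :=
  ((ContinuousLinearMap.compL ℝ X E ℝ).flip (P i)).comp bil
def Wd (i j : Fin 3) : (E →L[ℝ] ℝ) →L[ℝ] (X →L[ℝ] ℝ) :=
  (ContinuousLinearMap.compL ℝ X E ℝ).flip (P i - P j)
def K (i : Fin 3) : X →L[ℝ] (X →L[ℝ] ℝ) := (W i).comp (P i)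

def FF (Q r : Fin 3 → ℝ) (c : Fin 3 → E) (x : X) : X →L[ℝ] ℝ :=
  (∑ i, (r i • W i (x i - c i) - (2 * Q i ^ 2) • W i (x i)))
  - ∑ i, ∑ j ∈ Finset.univ.filter (fun j => i < j), (Q i * Q j / 2) • Wd i j (grd (x i - x j))

def BB (Q r : Fin 3 → ℝ) (x : X) : X →L[ℝ] (X →L[ℝ] ℝ) :=
  (∑ i, (r i • K i - (2 * Q i ^ 2) • K i))
  - ∑ i, ∑ j ∈ Finset.univ.filter (fun j => i < j),
      (Q i * Q j / 2) • ((Wd i j).comp ((hss (x i - x j)).comp (P i - P j)))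

lemma hasFDerivAt_V (Q r : Fin 3 → ℝ) (c : Fin 3 → E) (x : X) :
    HasFDerivAt (fun x : X =>
      (∑ i, (r i / 2 * ‖x i - c i‖ ^ 2 - Q i ^ 2 * ‖x i‖ ^ 2)) -
        ∑ i, ∑ j ∈ Finset.univ.filter (fun j => i < j),
          Q i * Q j / 2 * Real.arctan (‖x i - x j‖ ^ 2)) (FF Q r c x) x := by
  have hquad : ∀ i : Fin 3, HasFDerivAt
      (fun x : X => r i / 2 * ‖x i - c i‖ ^ 2 - Q i ^ 2 * ‖x i‖ ^ 2)
      (r i • W i (x i - c i) - (2 * Q i ^ 2) • W i (x i)) x := by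
    intro i
    have hp : HasFDerivAt (fun y : X => y i - c i) (P i) x := (P i).hasFDerivAt.sub_const (c i)
    have h1 : HasFDerivAt (fun y : X => ‖y i - c i‖ ^ 2)
        ((2 : ℕ) • (bil (x i - c i)).comp (P i)) x := hp.norm_sq
    have h2 : HasFDerivAt (fun y : X => ‖y i‖ ^ 2)
        ((2 : ℕ) • (bil (x i)).comp (P i)) x := (P i).hasFDerivAt.norm_sq
    have h := (h1.const_mul (r i / 2)).sub (h2.const_mul ((Q i) ^ 2))
    refine h.congr_fderiv ?_
    ext v
    simp only [W, ContinuousLinearMap.sub_apply, ContinuousLinearMap.smul_apply,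
      ContinuousLinearMap.comp_apply, ContinuousLinearMap.flip_apply,
      ContinuousLinearMap.compL_apply, bil_apply, smul_eq_mul,
      nsmul_eq_mul, Nat.cast_ofNat, ContinuousLinearMap.proj_apply]
    ring
  have harc : ∀ i j : Fin 3, HasFDerivAt
      (fun x : X => Q i * Q j / 2 * Real.arctan (‖x i - x j‖ ^ 2))
      ((Q i * Q j / 2) • Wd i j (grd (x i - x j))) x := by
    intro i j
    have hd : HasFDerivAt (fun y : X => y i - y j) (P i - P j) x := (P i - P j).hasFDerivAt
    have h := ((hasFDerivAt_arctanSq (x i - x j)).comp x hd).const_mul (Q i * Q j / 2)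
    exact h
  exact (HasFDerivAt.fun_sum fun i _ => hquad i).sub
    (HasFDerivAt.fun_sum fun i _ => HasFDerivAt.fun_sum fun j _ => harc i j)

lemma hasFDerivAt_FF (Q r : Fin 3 → ℝ) (c : Fin 3 → E) (x : X) :
    HasFDerivAt (FF Q r c) (BB Q r x) x := by
  have hquad : ∀ i : Fin 3, HasFDerivAt
      (fun x : X => r i • W i (x i - c i) - (2 * Q i ^ 2) • W i (x i))
      (r i • K i - (2 * Q i ^ 2) • K i) x := by
    intro i
    have hp : HasFDerivAt (fun y : X => y i - c i) (P i) x := (P i).hasFDerivAt.sub_const (c i)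
    have h1 : HasFDerivAt (fun y : X => W i (y i - c i)) ((W i).comp (P i)) x :=
      (W i).hasFDerivAt.comp x hp
    have h2 : HasFDerivAt (fun y : X => W i (y i)) ((W i).comp (P i)) x :=
      (W i).hasFDerivAt.comp x (P i).hasFDerivAt
    exact (h1.const_smul (r i)).sub (h2.const_smul (2 * Q i ^ 2))
  have harc : ∀ i j : Fin 3, HasFDerivAt
      (fun x : X => Wd i j (grd (x i - x j)))
      ((Wd i j).comp ((hss (x i - x j)).comp (P i - P j))) x := by
    intro i j
    have hd : HasFDerivAt (fun y : X => y i - y j) (P i - P j) x := (P i - P j).hasFDerivAt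
    have h1 : HasFDerivAt (fun y : X => grd (y i - y j)) ((hss (x i - x j)).comp (P i - P j)) x :=
      by have := (hasFDerivAt_grd (x i - x j)).comp x hd; exact this
    exact (Wd i j).hasFDerivAt.comp x h1
  exact (HasFDerivAt.fun_sum fun i _ => hquad i).sub
    (HasFDerivAt.fun_sum fun i _ => HasFDerivAt.fun_sum fun j _ => (harc i j).const_smul (Q i * Q j / 2))

lemma BB_apply (Q r : Fin 3 → ℝ) (x y : X) :
    BB Q r x y y = (∑ i, ((r i - 2 * Q i ^ 2) * ‖y i‖ ^ 2))
      - ∑ i, ∑ j ∈ Finset.univ.filter (fun j => i < j),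
          (Q i * Q j / 2) * hss (x i - x j) (y i - y j) (y i - y j) := by
  simp only [BB, K, W, Wd, ContinuousLinearMap.sub_apply, ContinuousLinearMap.sum_apply,
    ContinuousLinearMap.smul_apply, ContinuousLinearMap.comp_apply,
    ContinuousLinearMap.flip_apply, ContinuousLinearMap.compL_apply,
    ContinuousLinearMap.proj_apply, bil_apply, smul_eq_mul,
    real_inner_self_eq_norm_sq, P]
  congr 1
  exact Finset.sum_congr rfl fun i _ => by ring

lemma lam_le (Q r : Fin 3 → ℝ) (lam : ℝ)
    (hlam : lam = Finset.univ.inf' Finset.univ_nonempty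
      (fun i => r i - 4 * (Q i) ^ 2 - |Q i| * ∑ j ∈ Finset.univ.erase i, |Q j|))
    (i : Fin 3) :
    lam ≤ r i - 4 * (Q i) ^ 2 - |Q i| * ∑ j ∈ Finset.univ.erase i, |Q j| := by
  rw [hlam]; exact Finset.inf'_le _ (Finset.mem_univ i)

end Stmt19Aux

set_option maxHeartbeats 2000000 in
/-- the modified potential
`Ṽ(x₁,x₂,x₃) = ∑ᵢ ((rᵢ/2)‖xᵢ - mᵢ‖² - Qᵢ²‖xᵢ‖²) - ∑_{i<j} (QᵢQⱼ/2) arctan ‖xᵢ - xⱼ‖²`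
on `(ℝ²)³` is `λ`-strongly convex with
`λ = minᵢ (rᵢ - 4Qᵢ² - |Qᵢ| ∑_{j≠i} |Qⱼ|)` when this minimum is positive, i.e., its
Hessian satisfies `yᵀ ∇²Ṽ(x) y ≥ λ ‖y‖²` (with `‖y‖² = ∑ᵢ ‖yᵢ‖²`). -/
theorem stmt19 (Q r : Fin 3 → ℝ) (hr : ∀ i, 0 < r i)
    (c : Fin 3 → EuclideanSpace ℝ (Fin 2))
    (V : (Fin 3 → EuclideanSpace ℝ (Fin 2)) → ℝ)
    (hV : ∀ x, V x =
      (∑ i, (r i / 2 * ‖x i - c i‖ ^ 2 - (Q i) ^ 2 * ‖x i‖ ^ 2)) -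
        ∑ i, ∑ j ∈ Finset.univ.filter (fun j => i < j),
          Q i * Q j / 2 * Real.arctan (‖x i - x j‖ ^ 2))
    (lam : ℝ)
    (hlam : lam = Finset.univ.inf' Finset.univ_nonempty
      (fun i => r i - 4 * (Q i) ^ 2 - |Q i| * ∑ j ∈ Finset.univ.erase i, |Q j|))
    (hpos : 0 < lam) :
    ∀ (x y : Fin 3 → EuclideanSpace ℝ (Fin 2)),
      (fderiv ℝ (fderiv ℝ V) x) y y ≥ lam * ∑ i, ‖y i‖ ^ 2 := by
  intro x y
  open Stmt19Aux in
  have hVf : V = fun x : X =>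
      (∑ i, (r i / 2 * ‖x i - c i‖ ^ 2 - (Q i) ^ 2 * ‖x i‖ ^ 2)) -
        ∑ i, ∑ j ∈ Finset.univ.filter (fun j => i < j),
          Q i * Q j / 2 * Real.arctan (‖x i - x j‖ ^ 2) := funext hV
  have h1 : fderiv ℝ V = Stmt19Aux.FF Q r c := by
    funext z
    rw [hVf]
    exact (Stmt19Aux.hasFDerivAt_V Q r c z).fderiv
  rw [h1, (Stmt19Aux.hasFDerivAt_FF Q r c x).fderiv, Stmt19Aux.BB_apply]
  -- expand the Fin 3 sums
  have hf0 : Finset.univ.filter (fun j => (0 : Fin 3) < j) = {1, 2} := by decide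
  have hf1 : Finset.univ.filter (fun j => (1 : Fin 3) < j) = {2} := by decide
  have hf2 : Finset.univ.filter (fun j => (2 : Fin 3) < j) = ∅ := by decide
  have he0 : Finset.univ.erase (0 : Fin 3) = {1, 2} := by decide
  have he1 : Finset.univ.erase (1 : Fin 3) = {0, 2} := by decide
  have he2 : Finset.univ.erase (2 : Fin 3) = {0, 1} := by decide
  have hl0 := Stmt19Aux.lam_le Q r lam hlam 0
  have hl1 := Stmt19Aux.lam_le Q r lam hlam 1
  have hl2 := Stmt19Aux.lam_le Q r lam hlam 2
  rw [he0] at hl0; rw [he1] at hl1; rw [he2] at hl2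
  rw [Finset.sum_pair (by decide)] at hl0
  rw [Finset.sum_pair (by decide)] at hl1
  rw [Finset.sum_pair (by decide)] at hl2
  rw [Fin.sum_univ_three, Fin.sum_univ_three, Fin.sum_univ_three, hf0, hf1, hf2,
    Finset.sum_empty, Finset.sum_pair (by decide), Finset.sum_singleton]
  set t01 := Stmt19Aux.hss (x 0 - x 1) (y 0 - y 1) (y 0 - y 1) with ht01
  set t02 := Stmt19Aux.hss (x 0 - x 2) (y 0 - y 2) (y 0 - y 2) with ht02
  set t12 := Stmt19Aux.hss (x 1 - x 2) (y 1 - y 2) (y 1 - y 2) with ht12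
  have hbnd : ∀ i j : Fin 3,
      |Stmt19Aux.hss (x i - x j) (y i - y j) (y i - y j)| ≤ 2 * (‖y i‖ + ‖y j‖) ^ 2 := by
    intro i j
    refine (Stmt19Aux.abs_hss_le (x i - x j) (y i - y j)).trans ?_
    have h := norm_sub_le (y i) (y j)
    nlinarith [norm_nonneg (y i - y j), norm_nonneg (y i), norm_nonneg (y j)]
  have key : ∀ (q t A B : ℝ), |t| ≤ 2 * (A + B) ^ 2 → q / 2 * t ≤ |q| * (A + B) ^ 2 := by
    intro q t A B h
    calc q / 2 * t ≤ |q / 2 * t| := le_abs_self _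
      _ = |q| / 2 * |t| := by rw [abs_mul, abs_div]; norm_num
      _ ≤ |q| / 2 * (2 * (A + B) ^ 2) := by
          apply mul_le_mul_of_nonneg_left h (by positivity)
      _ = |q| * (A + B) ^ 2 := by ring
  have e01 := key (Q 0 * Q 1) t01 ‖y 0‖ ‖y 1‖ (hbnd 0 1)
  have e02 := key (Q 0 * Q 2) t02 ‖y 0‖ ‖y 2‖ (hbnd 0 2)
  have e12 := key (Q 1 * Q 2) t12 ‖y 1‖ ‖y 2‖ (hbnd 1 2)
  rw [abs_mul] at e01 e02 e12
  have m0 := mul_le_mul_of_nonneg_right hl0 (sq_nonneg ‖y 0‖)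
  have m1 := mul_le_mul_of_nonneg_right hl1 (sq_nonneg ‖y 1‖)
  have m2 := mul_le_mul_of_nonneg_right hl2 (sq_nonneg ‖y 2‖)
  nlinarith [sq_nonneg (|Q 0| * ‖y 0‖ - |Q 1| * ‖y 1‖),
    sq_nonneg (|Q 0| * ‖y 0‖ - |Q 2| * ‖y 2‖),
    sq_nonneg (|Q 1| * ‖y 1‖ - |Q 2| * ‖y 2‖),
    sq_abs (Q 0), sq_abs (Q 1), sq_abs (Q 2),
    abs_nonneg (Q 0), abs_nonneg (Q 1), abs_nonneg (Q 2),
    norm_nonneg (y 0), norm_nonneg (y 1), norm_nonneg (y 2), m0, m1, m2, e01, e02, e12]
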